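/- arXiv:2511.20438 — 4 statements merged into one kernel-verified Lean document; each statement's English description precedes it below -/
import Mathlib

section
/- Let S ⊆ ℝ^d have finite measure and Λ ⊆ ℝ^d separated. If E(Λ) is a Riesz sequence in L²(S) with bounds 0 < A ≤ B and Γ is a weak limit of translates of Λ, then E(Γ) is a Riesz sequence in L²(S) with the same bounds A, B. -/
open MeasureTheory Filter Metric Complex
open scoped ENNReal InnerProductSpace ComplexConjugate

noncomputable section

abbrev Euc (d : ℕ) := EuclideanSpace ℝ (Fin d)

variable {d : ℕ}

/-- The exponential function `e_λ(t) = e^{2πi λ·t}`. -/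
def expFn (l t : Euc d) : ℂ := Complex.exp (((2 * Real.pi * ⟪l, t⟫_ℝ : ℝ) : ℂ) * Complex.I)

lemma expFn_continuous (l : Euc d) : Continuous (expFn l) :=
  Complex.continuous_exp.comp <|
    (Complex.continuous_ofReal.comp (continuous_const.mul (continuous_const.inner continuous_id))).mul
      continuous_const

lemma expFn_norm (l t : Euc d) : ‖expFn l t‖ = 1 := by
  rw [expFn, Complex.norm_exp_ofReal_mul_I]

lemma expFn_memLp (S : Set (Euc d)) (hS : volume S ≠ ⊤) (l : Euc d) :
    MemLp (expFn l) 2 (volume.restrict S) := by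
  haveI : IsFiniteMeasure (volume.restrict S) :=
    ⟨by simpa [Measure.restrict_apply_univ] using lt_top_iff_ne_top.2 hS⟩
  refine MemLp.of_bound ((expFn_continuous l).aestronglyMeasurable) 1 ?_
  filter_upwards with t using le_of_eq (expFn_norm l t)

/-- `e_λ` as an element of `L²(S)`. -/
def expLp (S : Set (Euc d)) (hS : volume S ≠ ⊤) (l : Euc d) :
    Lp ℂ 2 (volume.restrict S) := (expFn_memLp S hS l).toLp _

/-- Pointwise multiplication by `e_x` (modulation) as a map on `L²(S)`. -/
def modLp (S : Set (Euc d)) (_hS : volume S ≠ ⊤) (x : Euc d)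
    (f : Lp ℂ 2 (volume.restrict S)) : Lp ℂ 2 (volume.restrict S) :=
  MemLp.toLp (fun t => expFn x t * f t) <| by
    refine MemLp.of_le (Lp.memLp f)
      (((expFn_continuous x).aestronglyMeasurable).mul (Lp.aestronglyMeasurable f)) ?_
    filter_upwards with t using le_of_eq (by rw [norm_mul, expFn_norm, one_mul])

/-- The translate `Λ - x` of a point set. -/
def setTrans (Λ : Set (Euc d)) (x : Euc d) : Set (Euc d) := (fun l => l - x) '' Λ

/-- Weak convergence of point sets in Beurling's sense. -/
def WeakLim (Λn : ℕ → Set (Euc d)) (Γ : Set (Euc d)) : Prop :=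
  (∀ γ ∈ Γ, ∃ u : ℕ → Euc d, (∀ n, u n ∈ Λn n) ∧ Tendsto u atTop (nhds γ)) ∧
  (∀ φ : ℕ → ℕ, StrictMono φ → ∀ u : ℕ → Euc d, (∀ k, u k ∈ Λn (φ k)) →
    ∀ γ : Euc d, Tendsto u atTop (nhds γ) → γ ∈ Γ)

/-- `Γ` is a weak limit of translates of `Λ`. -/
def InHull (Λ Γ : Set (Euc d)) : Prop :=
  ∃ x : ℕ → Euc d, WeakLim (fun n => setTrans Λ (x n)) Γ

/-- `Λ` is separated. -/
def IsSeparated (Λ : Set (Euc d)) : Prop :=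
  ∃ s > (0:ℝ), ∀ l ∈ Λ, ∀ m ∈ Λ, l ≠ m → s ≤ dist l m

/-- The separation constant `Sep(Λ)`. -/
def sepConst (Λ : Set (Euc d)) : ℝ≥0∞ :=
  ⨅ (l : Λ) (m : Λ) (_ : (l : Euc d) ≠ (m : Euc d)), edist (l : Euc d) (m : Euc d)

/-- Upper Beurling density. -/
def upperDensity (Λ : Set (Euc d)) : ℝ≥0∞ :=
  Filter.limsup (fun r : ℝ =>
    ⨆ x : Euc d, ((Λ ∩ ball x r).ncard : ℝ≥0∞) / volume (ball (0 : Euc d) r)) atTop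

/-- Lower Beurling density. -/
def lowerDensity (Λ : Set (Euc d)) : ℝ≥0∞ :=
  Filter.liminf (fun r : ℝ =>
    ⨅ x : Euc d, ((Λ ∩ ball x r).ncard : ℝ≥0∞) / volume (ball (0 : Euc d) r)) atTop

/-- Frame inequalities for `E(Λ)` in `L²(S)`. -/
def IsFrame (S : Set (Euc d)) (hS : volume S ≠ ⊤) (Λ : Set (Euc d)) (A B : ℝ) : Prop :=
  ∀ f : Lp ℂ 2 (volume.restrict S),
    A * ‖f‖ ^ 2 ≤ ∑' l : Λ, ‖⟪expLp S hS (l : Euc d), f⟫_ℂ‖ ^ 2 ∧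
    ∑' l : Λ, ‖⟪expLp S hS (l : Euc d), f⟫_ℂ‖ ^ 2 ≤ B * ‖f‖ ^ 2

/-- Bessel inequality for `E(Λ)` in `L²(S)`. -/
def IsBessel (S : Set (Euc d)) (hS : volume S ≠ ⊤) (Λ : Set (Euc d)) (B : ℝ) : Prop :=
  ∀ f : Lp ℂ 2 (volume.restrict S),
    ∑' l : Λ, ‖⟪expLp S hS (l : Euc d), f⟫_ℂ‖ ^ 2 ≤ B * ‖f‖ ^ 2

/-- The frame operator `S_Λ`. -/
def frameOp (S : Set (Euc d)) (hS : volume S ≠ ⊤) (Λ : Set (Euc d))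
    (f : Lp ℂ 2 (volume.restrict S)) : Lp ℂ 2 (volume.restrict S) :=
  ∑' l : Λ, ⟪expLp S hS (l : Euc d), f⟫_ℂ • expLp S hS (l : Euc d)

/-- Riesz sequence inequalities for `E(Λ)` in `L²(S)`. -/
def IsRieszSeq (S : Set (Euc d)) (hS : volume S ≠ ⊤) (Λ : Set (Euc d)) (A B : ℝ) : Prop :=
  ∀ c : Λ →₀ ℂ,
    A * ∑ l ∈ c.support, ‖c l‖ ^ 2 ≤ ‖∑ l ∈ c.support, c l • expLp S hS (l : Euc d)‖ ^ 2 ∧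
    ‖∑ l ∈ c.support, c l • expLp S hS (l : Euc d)‖ ^ 2 ≤ B * ∑ l ∈ c.support, ‖c l‖ ^ 2

/-- Closed linear span of `E(Λ)` in `L²(S)`. -/
def spanExp (S : Set (Euc d)) (hS : volume S ≠ ⊤) (Λ : Set (Euc d)) :
    Submodule ℂ (Lp ℂ 2 (volume.restrict S)) :=
  (Submodule.span ℂ (expLp S hS '' Λ)).topologicalClosure

/-- Orthogonal projection onto the closed span of `E(Λ)`. -/
def projExp (S : Set (Euc d)) (hS : volume S ≠ ⊤) (Λ : Set (Euc d))
    (f : Lp ℂ 2 (volume.restrict S)) : Lp ℂ 2 (volume.restrict S) :=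
  haveI : CompleteSpace (spanExp S hS Λ) :=
    (Submodule.isClosed_topologicalClosure _).completeSpace_coe
  (Submodule.orthogonalProjectionOnto (spanExp S hS Λ) f : Lp ℂ 2 (volume.restrict S))

/-- `E(Λ)` is a Riesz basis for `L²(S)`. -/
def IsRieszBasis (S : Set (Euc d)) (hS : volume S ≠ ⊤) (Λ : Set (Euc d)) : Prop :=
  (∃ A B : ℝ, 0 < A ∧ A ≤ B ∧ IsRieszSeq S hS Λ A B) ∧ spanExp S hS Λ = ⊤



section AuxProof

variable (S : Set (Euc d)) (hS : volume S ≠ ⊤)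

lemma expFn_add' (a b t : Euc d) : expFn (a + b) t = expFn a t * expFn b t := by
  rw [expFn, expFn, expFn, ← Complex.exp_add]
  congr 1
  rw [inner_add_left]
  push_cast
  ring

lemma expFn_cont_left (t : Euc d) : Continuous (fun l : Euc d => expFn l t) :=
  Complex.continuous_exp.comp <|
    (Complex.continuous_ofReal.comp
      (continuous_const.mul ((continuous_id.inner continuous_const)))).mul continuous_const

lemma coeFn_sum_expLp {ι : Type*} (t : Finset ι) (g : ι → Euc d) (c : ι → ℂ) :
    (((∑ i ∈ t, c i • expLp S hS (g i) : Lp ℂ 2 (volume.restrict S))) : Euc d → ℂ)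
      =ᵐ[volume.restrict S] fun s => ∑ i ∈ t, c i • expFn (g i) s := by
  classical
  induction t using Finset.induction_on with
  | empty =>
    filter_upwards [Lp.coeFn_zero (E := ℂ) (p := 2) (μ := volume.restrict S)] with s hs
    simp only [Finset.sum_empty]; exact hs
  | @insert a s ha ih =>
    have h1 := Lp.coeFn_add (c a • expLp S hS (g a)) (∑ i ∈ s, c i • expLp S hS (g i))
    have h2 := Lp.coeFn_smul (c a) (expLp S hS (g a))
    have h3 := MemLp.coeFn_toLp (expFn_memLp S hS (g a))
    filter_upwards [h1, h2, h3, ih] with x e1 e2 e3 e4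
    simp only [Finset.sum_insert ha]
    rw [e1]
    simp only [Pi.add_apply, e2, Pi.smul_apply, e4]
    rw [show (expLp S hS (g a) : Euc d → ℂ) x = expFn (g a) x from e3]

lemma norm_sum_expLp_translate {ι : Type*} (t : Finset ι) (g : ι → Euc d) (c : ι → ℂ)
    (x : Euc d) :
    ‖∑ i ∈ t, c i • expLp S hS (g i + x)‖ = ‖∑ i ∈ t, c i • expLp S hS (g i)‖ := by
  have e1 : eLpNorm (⇑(∑ i ∈ t, c i • expLp S hS (g i + x))) 2 (volume.restrict S)
      = eLpNorm (fun s => ∑ i ∈ t, c i • expFn (g i + x) s) 2 (volume.restrict S) :=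
    eLpNorm_congr_ae (coeFn_sum_expLp S hS t (fun i => g i + x) c)
  have e2 : eLpNorm (⇑(∑ i ∈ t, c i • expLp S hS (g i))) 2 (volume.restrict S)
      = eLpNorm (fun s => ∑ i ∈ t, c i • expFn (g i) s) 2 (volume.restrict S) :=
    eLpNorm_congr_ae (coeFn_sum_expLp S hS t g c)
  have e3 : eLpNorm (fun s => ∑ i ∈ t, c i • expFn (g i + x) s) 2 (volume.restrict S)
      = eLpNorm (fun s => ∑ i ∈ t, c i • expFn (g i) s) 2 (volume.restrict S) := by
    apply eLpNorm_congr_norm_ae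
    filter_upwards with s
    have hterm : ∀ i, c i • expFn (g i + x) s = expFn x s * (c i • expFn (g i) s) := by
      intro i
      rw [expFn_add']
      simp only [smul_eq_mul]
      ring
    rw [Finset.sum_congr rfl (fun i _ => hterm i), ← Finset.mul_sum, norm_mul, expFn_norm,
      one_mul]
  rw [Lp.norm_def, Lp.norm_def, e1, e2, e3]

lemma norm_toLp_two_sq {f : Euc d → ℂ} (hf : MemLp f 2 (volume.restrict S)) :
    ‖hf.toLp f‖ ^ 2 = ∫ s, ‖f s‖ ^ 2 ∂(volume.restrict S) := by
  rw [← inner_self_eq_norm_sq (𝕜 := ℂ) (hf.toLp f), L2.inner_def,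
    ← integral_re (L2.integrable_inner (𝕜 := ℂ) _ _)]
  refine integral_congr_ae ?_
  filter_upwards [hf.coeFn_toLp] with s hs
  rw [hs]
  exact inner_self_eq_norm_sq (𝕜 := ℂ) (f s)

lemma tendsto_expLp {u : ℕ → Euc d} {γ : Euc d} (hu : Tendsto u atTop (nhds γ)) :
    Tendsto (fun n => expLp S hS (u n)) atTop (nhds (expLp S hS γ)) := by
  haveI : IsFiniteMeasure (volume.restrict S) :=
    ⟨by simpa [Measure.restrict_apply_univ] using lt_top_iff_ne_top.2 hS⟩
  have hsq : ∀ n, ‖expLp S hS (u n) - expLp S hS γ‖ ^ 2 =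
      ∫ s, ‖expFn (u n) s - expFn γ s‖ ^ 2 ∂(volume.restrict S) := by
    intro n
    rw [expLp, expLp, ← MemLp.toLp_sub]
    exact norm_toLp_two_sq S ((expFn_memLp S hS (u n)).sub (expFn_memLp S hS γ))
  have key : Tendsto (fun n => ∫ s, ‖expFn (u n) s - expFn γ s‖ ^ 2 ∂(volume.restrict S))
      atTop (nhds 0) := by
    have h0 : (0 : ℝ) = ∫ _ : Euc d, (0 : ℝ) ∂(volume.restrict S) := by simp
    rw [h0]
    refine tendsto_integral_of_dominated_convergence (fun _ => (4 : ℝ)) ?_ ?_ ?_ ?_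
    · intro n
      exact (((expFn_continuous (u n)).sub (expFn_continuous γ)).norm.pow 2).aestronglyMeasurable
    · exact integrable_const _
    · intro n
      filter_upwards with s
      have h1 : ‖expFn (u n) s - expFn γ s‖ ≤ 2 := by
        calc ‖expFn (u n) s - expFn γ s‖ ≤ ‖expFn (u n) s‖ + ‖expFn γ s‖ := norm_sub_le _ _
        _ = 2 := by rw [expFn_norm, expFn_norm]; norm_num
      have h2 : (0:ℝ) ≤ ‖expFn (u n) s - expFn γ s‖ := norm_nonneg _
      rw [Real.norm_eq_abs, _root_.abs_of_nonneg (pow_nonneg h2 2)]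
      nlinarith
    · filter_upwards with s
      have hc : Tendsto (fun n => expFn (u n) s) atTop (nhds (expFn γ s)) :=
        ((expFn_cont_left s).tendsto γ).comp hu
      have ht : Tendsto (fun n => ‖expFn (u n) s - expFn γ s‖ ^ 2) atTop
          (nhds (‖expFn γ s - expFn γ s‖ ^ 2)) := ((hc.sub tendsto_const_nhds).norm).pow 2
      simpa using ht
  have hsqt : Tendsto (fun n => ‖expLp S hS (u n) - expLp S hS γ‖ ^ 2) atTop (nhds 0) := by
    simpa only [hsq] using key
  have hs2 : Tendsto (fun n => Real.sqrt (‖expLp S hS (u n) - expLp S hS γ‖ ^ 2)) atTop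
      (nhds (Real.sqrt 0)) := hsqt.sqrt
  rw [Real.sqrt_zero] at hs2
  rw [tendsto_iff_norm_sub_tendsto_zero]
  convert hs2 using 2 with n
  rw [Real.sqrt_sq (norm_nonneg _)]

lemma rs_indexed {Λ : Set (Euc d)} {A B : ℝ} (hR : IsRieszSeq S hS Λ A B)
    {ι : Type} (t : Finset ι) (g : ι → Euc d) (c : ι → ℂ)
    (hg : ∀ i ∈ t, g i ∈ Λ) (hinj : Set.InjOn g ↑t) :
    A * ∑ i ∈ t, ‖c i‖ ^ 2 ≤ ‖∑ i ∈ t, c i • expLp S hS (g i)‖ ^ 2 ∧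
      ‖∑ i ∈ t, c i • expLp S hS (g i)‖ ^ 2 ≤ B * ∑ i ∈ t, ‖c i‖ ^ 2 := by
  classical
  let f : {i // i ∈ t} → Λ := fun i => ⟨g i.1, hg i.1 i.2⟩
  have hfinj : Function.Injective f := by
    intro a b h
    exact Subtype.ext (hinj (Finset.mem_coe.mpr a.2) (Finset.mem_coe.mpr b.2)
      (congrArg Subtype.val h))
  let c₀ : Λ →₀ ℂ := ∑ i ∈ t.attach, Finsupp.single (f i) (c i.1)
  have hc₀ : ∀ i : {i // i ∈ t}, c₀ (f i) = c i.1 := by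
    intro i
    rw [show c₀ (f i) = ∑ j ∈ t.attach, (Finsupp.single (f j) (c j.1)) (f i) from
      Finsupp.finset_sum_apply _ _ _]
    rw [Finset.sum_eq_single i]
    · exact Finsupp.single_eq_same
    · intro j _ hj
      exact Finsupp.single_eq_of_ne' (fun h => hj (hfinj h))
    · intro h
      exact absurd (t.mem_attach i) h
  have hsupp : c₀.support ⊆ t.attach.image f := by
    intro l hl
    rw [Finset.mem_image]
    by_contra hcon
    push_neg at hcon
    have hz : c₀ l = 0 := by
      rw [show c₀ l = ∑ j ∈ t.attach, (Finsupp.single (f j) (c j.1)) l from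
        Finsupp.finset_sum_apply _ _ _]
      exact Finset.sum_eq_zero fun i hi => Finsupp.single_eq_of_ne' (fun h => hcon i hi h)
    exact Finsupp.mem_support_iff.mp hl hz
  have key : ∀ (M : Type) [AddCommMonoid M] (F : Euc d → ℂ → M), (∀ l, F l 0 = 0) →
      ∑ l ∈ c₀.support, F (l : Euc d) (c₀ l) = ∑ i ∈ t, F (g i) (c i) := by
    intro M _ F hF
    rw [Finset.sum_subset hsupp (fun l _ hl => by
      rw [Finsupp.notMem_support_iff.mp hl, hF])]
    rw [Finset.sum_image (fun a _ b _ h => hfinj h)]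
    rw [Finset.sum_congr rfl (fun i _ => by rw [hc₀ i])]
    exact Finset.sum_attach t (fun i => F (g i) (c i))
  have h1 : ∑ l ∈ c₀.support, ‖c₀ l‖ ^ 2 = ∑ i ∈ t, ‖c i‖ ^ 2 :=
    key ℝ (fun _ z => ‖z‖ ^ 2) (by simp)
  have h2 : ∑ l ∈ c₀.support, c₀ l • expLp S hS (l : Euc d)
      = ∑ i ∈ t, c i • expLp S hS (g i) :=
    key _ (fun l z => z • expLp S hS l) (by simp)
  have := hR c₀
  rw [h1, h2] at this
  exact this

lemma rs_translate {Λ : Set (Euc d)} {A B : ℝ} (hR : IsRieszSeq S hS Λ A B) (x : Euc d)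
    {ι : Type} (t : Finset ι) (g : ι → Euc d) (c : ι → ℂ)
    (hg : ∀ i ∈ t, g i ∈ setTrans Λ x) (hinj : Set.InjOn g ↑t) :
    A * ∑ i ∈ t, ‖c i‖ ^ 2 ≤ ‖∑ i ∈ t, c i • expLp S hS (g i)‖ ^ 2 ∧
      ‖∑ i ∈ t, c i • expLp S hS (g i)‖ ^ 2 ≤ B * ∑ i ∈ t, ‖c i‖ ^ 2 := by
  have hgx : ∀ i ∈ t, g i + x ∈ Λ := by
    intro i hi
    obtain ⟨l, hl, hlx⟩ := hg i hi
    rw [← hlx]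
    simpa [sub_add_cancel] using hl
  have hinj' : Set.InjOn (fun i => g i + x) ↑t := fun a ha b hb h =>
    hinj ha hb (by simpa using congrArg (fun y => y - x) h)
  have h := rs_indexed S hS hR t (fun i => g i + x) c hgx hinj'
  rwa [norm_sum_expLp_translate S hS t g c x] at h

end AuxProof

theorem stmt10 {d : ℕ} (S : Set (Euc d)) (hS : volume S ≠ ⊤) (Λ : Set (Euc d))
    (hsep : IsSeparated Λ) (A B : ℝ) (hA : 0 < A) (hAB : A ≤ B)
    (hR : IsRieszSeq S hS Λ A B)
    (Γ : Set (Euc d)) (hΓ : InHull Λ Γ) :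
    IsRieszSeq S hS Γ A B := by
  classical
  obtain ⟨x, hW1, hW2⟩ := hΓ
  intro c
  choose u hu1 hu2 using fun γ : Γ => hW1 γ.1 γ.2
  have hF : Tendsto (fun n => ∑ γ ∈ c.support, c γ • expLp S hS (u γ n)) atTop
      (nhds (∑ γ ∈ c.support, c γ • expLp S hS (γ : Euc d))) := by
    refine tendsto_finset_sum _ fun γ _ => ?_
    exact (tendsto_expLp S hS (hu2 γ)).const_smul (c γ)
  have hN : Tendsto (fun n => ‖∑ γ ∈ c.support, c γ • expLp S hS (u γ n)‖ ^ 2) atTop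
      (nhds (‖∑ γ ∈ c.support, c γ • expLp S hS (γ : Euc d)‖ ^ 2)) := hF.norm.pow 2
  have hinj : ∀ᶠ n in atTop, Set.InjOn (fun γ : Γ => u γ n) ↑c.support := by
    have hev : ∀ᶠ n in atTop, ∀ γ ∈ c.support, ∀ γ' ∈ c.support, γ ≠ γ' → u γ n ≠ u γ' n := by
      rw [eventually_all_finset]
      intro γ _
      rw [eventually_all_finset]
      intro γ' _
      by_cases hne : γ = γ'
      · exact Eventually.of_forall fun n h => absurd hne h
      · have hd : (0:ℝ) < dist (γ : Euc d) (γ' : Euc d) :=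
          dist_pos.2 fun h => hne (Subtype.ext h)
        have hdt : Tendsto (fun n => dist (u γ n) (u γ' n)) atTop
            (nhds (dist (γ : Euc d) (γ' : Euc d))) := (hu2 γ).dist (hu2 γ')
        filter_upwards [hdt.eventually (eventually_gt_nhds hd)] with n hn
        exact fun _ => dist_pos.mp hn
    filter_upwards [hev] with n hn γ hγ γ' hγ' heq
    by_contra hne
    exact hn γ (Finset.mem_coe.mp hγ) γ' (Finset.mem_coe.mp hγ') hne heq
  have hbound : ∀ᶠ n in atTop,
      A * ∑ γ ∈ c.support, ‖c γ‖ ^ 2 ≤ ‖∑ γ ∈ c.support, c γ • expLp S hS (u γ n)‖ ^ 2 ∧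
      ‖∑ γ ∈ c.support, c γ • expLp S hS (u γ n)‖ ^ 2 ≤ B * ∑ γ ∈ c.support, ‖c γ‖ ^ 2 := by
    filter_upwards [hinj] with n hn
    exact rs_translate S hS hR (x n) c.support (fun γ => u γ n) (fun γ => c γ)
      (fun γ _ => hu1 γ n) hn
  exact ⟨ge_of_tendsto hN (hbound.mono fun n h => h.1),
    le_of_tendsto hN (hbound.mono fun n h => h.2)⟩

end
end

section
/- Let Q ⊆ ℝ^d be Lebesgue measurable. Then liminf_{r→∞} inf_{x∈ℝ^d} |Q ∩ B_r(x)| / |B_r(0)| = 0 if and only if for every r > 0 and δ > 0 there exists x ∈ ℝ^d such that |Q ∩ B_r(x)| < δ. -/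
open MeasureTheory Filter Metric Complex
open scoped ENNReal InnerProductSpace ComplexConjugate

noncomputable section

variable {d : ℕ}

lemma avg_bound {d : ℕ} (Q : Set (Euc d)) (hQ : MeasurableSet Q) {r r' δ : ℝ}
    (x : Euc d)
    (h : ∀ y : Euc d, ENNReal.ofReal δ ≤ volume (Q ∩ ball y r)) :
    ENNReal.ofReal δ * volume (ball x (r' - r)) ≤
      volume (Q ∩ ball x r') * volume (ball (0 : Euc d) r) := by
  set B := ball x (r' - r) with hB
  set g : Euc d → Euc d → ℝ≥0∞ := fun y t =>
    (Q ∩ ball x r').indicator 1 t * (ball (0 : Euc d) r).indicator 1 (t - y) with hg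
  have hgm : Measurable (Function.uncurry g) := by
    apply Measurable.mul
    · exact (measurable_one.indicator (hQ.inter measurableSet_ball)).comp measurable_snd
    · exact (measurable_one.indicator measurableSet_ball).comp (measurable_snd.sub measurable_fst)
  calc ENNReal.ofReal δ * volume B = ∫⁻ _ in B, ENNReal.ofReal δ := by
        rw [setLIntegral_const]
    _ ≤ ∫⁻ y in B, volume (Q ∩ ball y r) := lintegral_mono fun y => h y
    _ ≤ ∫⁻ y in B, ∫⁻ t, g y t := by
        refine setLIntegral_mono' measurableSet_ball fun y hy => ?_
        rw [← lintegral_indicator_one (hQ.inter measurableSet_ball)]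
        refine lintegral_mono fun t => ?_
        by_cases ht : t ∈ Q ∩ ball y r
        · have h1 : t ∈ Q ∩ ball x r' := by
            refine ⟨ht.1, mem_ball.mpr ?_⟩
            have h2 : dist t y < r := mem_ball.mp ht.2
            have h3 : dist y x < r' - r := mem_ball.mp hy
            calc dist t x ≤ dist t y + dist y x := dist_triangle t y x
              _ < r + (r' - r) := by linarith
              _ = r' := by ring
          have h2 : t - y ∈ ball (0 : Euc d) r := by
            rw [mem_ball_zero_iff, ← dist_eq_norm]
            exact mem_ball.mp ht.2
          simp [hg, Set.indicator_of_mem, ht, h1, h2]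
        · simp [Set.indicator_of_notMem ht]
    _ = ∫⁻ t, ∫⁻ y in B, g y t := lintegral_lintegral_swap hgm.aemeasurable
    _ ≤ ∫⁻ t, (Q ∩ ball x r').indicator 1 t * volume (ball (0 : Euc d) r) := by
        refine lintegral_mono fun t => ?_
        rw [hg]
        rw [lintegral_const_mul' _ _ (by by_cases h : t ∈ Q ∩ ball x r' <;> simp [h])]
        refine mul_le_mul_right ?_ _
        calc ∫⁻ y in B, (ball (0 : Euc d) r).indicator 1 (t - y)
            ≤ ∫⁻ y, (ball (0 : Euc d) r).indicator 1 (t - y) := setLIntegral_le_lintegral _ _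
          _ = volume (ball t r) := by
              have heq : ∀ y : Euc d, (ball (0 : Euc d) r).indicator (1 : Euc d → ℝ≥0∞) (t - y)
                  = (ball t r).indicator 1 y := by
                intro y
                have hmem : t - y ∈ ball (0 : Euc d) r ↔ y ∈ ball t r := by
                  rw [mem_ball_zero_iff, ← dist_eq_norm, dist_comm, mem_ball]
                by_cases hy : y ∈ ball t r
                · simp [Set.indicator_of_mem, hy, hmem.mpr hy]
                · have hny : t - y ∉ ball (0 : Euc d) r := fun h => hy (hmem.mp h)
                  simp [Set.indicator_of_notMem, hy, hny]
              simp_rw [heq]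
              exact lintegral_indicator_one measurableSet_ball
          _ = volume (ball (0 : Euc d) r) := Measure.addHaar_ball_center volume t r
    _ = volume (Q ∩ ball x r') * volume (ball (0 : Euc d) r) := by
        rw [lintegral_mul_const' _ _ measure_ball_lt_top.ne,
          lintegral_indicator_one (hQ.inter measurableSet_ball)]

lemma ball_scale {d : ℕ} {r r' : ℝ} (hr : 0 < r) (h2 : 2 * r ≤ r') :
    volume (ball (0 : Euc d) r') ≤ 2 ^ d * volume (ball (0 : Euc d) (r' - r)) := by
  rcases Nat.eq_zero_or_pos d with hd | hd
  · subst hd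
    have h1 : (0 : Euc 0) ∈ ball (0 : Euc 0) r' := by
      simp [mem_ball]; linarith
    have h2' : ball (0 : Euc 0) r' = ball (0 : Euc 0) (r' - r) := by
      ext y
      have : y = 0 := Subsingleton.elim y 0
      subst this
      simp [mem_ball]
      constructor <;> intro <;> linarith
    rw [h2']
    simpa using le_self_add
  haveI : Nontrivial (Euc d) := by
    have : 1 ≤ d := hd
    exact ⟨⟨EuclideanSpace.single ⟨0, hd⟩ 1, 0, by
      intro hcon
      have := congrArg (fun f : Euc d => f ⟨0, hd⟩) hcon
      simp at this⟩⟩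
  have h0 : (0 : ℝ) ≤ r' - r := by linarith
  have h0' : (0 : ℝ) ≤ r' := by linarith
  rw [Measure.addHaar_ball _ _ h0', Measure.addHaar_ball _ _ h0,
    finrank_euclideanSpace_fin]
  rw [← mul_assoc]
  refine mul_le_mul_left ?_ _
  have hle : r' ^ d ≤ 2 ^ d * (r' - r) ^ d := by
    calc r' ^ d ≤ (2 * (r' - r)) ^ d := pow_le_pow_left₀ h0' (by linarith) d
      _ = 2 ^ d * (r' - r) ^ d := by rw [mul_pow]
  calc ENNReal.ofReal (r' ^ d) ≤ ENNReal.ofReal (2 ^ d * (r' - r) ^ d) :=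
        ENNReal.ofReal_le_ofReal hle
    _ = 2 ^ d * ENNReal.ofReal ((r' - r) ^ d) := by
        rw [ENNReal.ofReal_mul (by positivity), ENNReal.ofReal_pow (by norm_num),
          ENNReal.ofReal_ofNat]

theorem stmt11 {d : ℕ} (Q : Set (Euc d)) (hQ : MeasurableSet Q) :
    Filter.liminf (fun r : ℝ =>
        ⨅ x : Euc d, volume (Q ∩ ball x r) / volume (ball (0 : Euc d) r)) atTop = 0 ↔
      ∀ r > (0 : ℝ), ∀ δ > (0 : ℝ), ∃ x : Euc d,
        volume (Q ∩ ball x r) < ENNReal.ofReal δ := by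
  constructor
  · intro hlim r hr δ hδ
    by_contra hcon
    push_neg at hcon
    set Vr := volume (ball (0 : Euc d) r) with hVrdef
    have hVr0 : Vr ≠ 0 := (measure_ball_pos volume 0 hr).ne'
    have hVrt : Vr ≠ ⊤ := measure_ball_lt_top.ne
    set C : ℝ≥0∞ := 2 ^ d * Vr with hCdef
    have hC0 : C ≠ 0 := mul_ne_zero (by positivity) hVr0
    have hCt : C ≠ ⊤ := ENNReal.mul_ne_top (by simp) hVrt
    set ε := ENNReal.ofReal (δ / 2) / C with hεdef
    have hε0 : 0 < ε :=
      ENNReal.div_pos (by simp [ENNReal.ofReal_pos]; linarith) hCt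
    have hfreq : ∃ᶠ r' in atTop, (⨅ x : Euc d,
        volume (Q ∩ ball x r') / volume (ball (0 : Euc d) r')) < ε :=
      frequently_lt_of_liminf_lt (by isBoundedDefault) (by rw [hlim]; exact hε0)
    obtain ⟨r', hlt, hge⟩ := (hfreq.and_eventually (eventually_ge_atTop (2 * r))).exists
    have hr'0 : 0 < r' := by linarith
    obtain ⟨x, hx⟩ := iInf_lt_iff.mp hlt
    have hV'0 : volume (ball (0 : Euc d) r') ≠ 0 := (measure_ball_pos volume 0 hr'0).ne'
    have hV't : volume (ball (0 : Euc d) r') ≠ ⊤ := measure_ball_lt_top.ne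
    have hxlt : volume (Q ∩ ball x r') < ε * volume (ball (0 : Euc d) r') :=
      (ENNReal.div_lt_iff (Or.inl hV'0) (Or.inl hV't)).mp hx
    have key := avg_bound Q hQ (r' := r') x hcon
    set W := volume (ball (0 : Euc d) (r' - r)) with hWdef
    have hW0 : W ≠ 0 := (measure_ball_pos volume 0 (by linarith)).ne'
    have hWt : W ≠ ⊤ := measure_ball_lt_top.ne
    have hWc : volume (ball x (r' - r)) = W := Measure.addHaar_ball_center volume x _
    rw [hWc] at key
    have hscale : volume (ball (0 : Euc d) r') ≤ 2 ^ d * W := ball_scale hr hge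
    have hchain : ENNReal.ofReal δ * W < ENNReal.ofReal (δ / 2) * W := by
      calc ENNReal.ofReal δ * W ≤ volume (Q ∩ ball x r') * Vr := key
        _ < ε * volume (ball (0 : Euc d) r') * Vr :=
            by rw [mul_comm _ Vr, mul_comm _ Vr]; exact ENNReal.mul_lt_mul_right hVr0 hVrt hxlt
        _ ≤ ε * (2 ^ d * W) * Vr :=
            mul_le_mul_left (mul_le_mul_right hscale ε) Vr
        _ = ε * C * W := by rw [hCdef]; ring
        _ = ENNReal.ofReal (δ / 2) * W := by
            rw [hεdef, ENNReal.div_mul_cancel hC0 hCt]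
    have : ENNReal.ofReal (δ / 2) * W ≤ ENNReal.ofReal δ * W :=
      mul_le_mul_left (ENNReal.ofReal_le_ofReal (by linarith)) W
    exact absurd hchain (not_lt.mpr this)
  · intro h
    refine le_antisymm ?_ zero_le
    have hev : ∀ᶠ r' in atTop, (⨅ x : Euc d,
        volume (Q ∩ ball x r') / volume (ball (0 : Euc d) r')) ≤ 0 := by
      filter_upwards [eventually_ge_atTop (1 : ℝ)] with r' hr'
      have hr'0 : (0 : ℝ) < r' := lt_of_lt_of_le one_pos hr'
      set V := volume (ball (0 : Euc d) r') with hVdef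
      have hV0 : V ≠ 0 := (measure_ball_pos volume 0 hr'0).ne'
      have hVt : V ≠ ⊤ := measure_ball_lt_top.ne
      refine le_of_eq (iInf_eq_bot |>.mpr fun b hb => ?_)
      set b' := min b 1 with hb'def
      have hb'0 : b' ≠ 0 := (lt_min hb one_pos).ne'
      have hb't : b' ≠ ⊤ := (lt_of_le_of_lt (min_le_right _ _) ENNReal.one_lt_top).ne
      have hmt : b' * V ≠ ⊤ := ENNReal.mul_ne_top hb't hVt
      have hδ0 : 0 < (b' * V).toReal := ENNReal.toReal_pos (mul_ne_zero hb'0 hV0) hmt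
      obtain ⟨x, hx⟩ := h r' hr'0 _ hδ0
      rw [ENNReal.ofReal_toReal hmt] at hx
      refine ⟨x, ?_⟩
      have : volume (Q ∩ ball x r') / V < b' :=
        (ENNReal.div_lt_iff (Or.inl hV0) (Or.inl hVt)).mpr hx
      exact lt_of_lt_of_le this (min_le_left _ _)
    exact liminf_le_of_frequently_le hev.frequently

end
end

section
/- Let Q ⊆ ℝ^d be measurable and suppose there exist r₀, δ₀ > 0 such that |Q ∩ B_{r₀}(x)| ≥ δ₀ for all x ∈ ℝ^d. Then for all r > 0 and all y ∈ ℝ^d, |Q ∩ B_{r+r₀}(y)| / |B_r(0)| ≥ δ₀ / |B_{r₀}(0)|. -/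
open MeasureTheory Filter Metric Complex
open scoped ENNReal InnerProductSpace ComplexConjugate

noncomputable section

variable {d : ℕ}

theorem stmt12 {d : ℕ} (Q : Set (Euc d)) (hQ : MeasurableSet Q)
    (r₀ δ₀ : ℝ) (hr₀ : 0 < r₀) (hδ₀ : 0 < δ₀)
    (h : ∀ x : Euc d, ENNReal.ofReal δ₀ ≤ volume (Q ∩ ball x r₀)) :
    ∀ r > (0 : ℝ), ∀ y : Euc d,
      ENNReal.ofReal δ₀ / volume (ball (0 : Euc d) r₀) ≤
        volume (Q ∩ ball y (r + r₀)) / volume (ball (0 : Euc d) r) := by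
  intro r hr y
  set V₀ := volume (ball (0 : Euc d) r₀) with hV₀
  set Vr := volume (ball (0 : Euc d) r) with hVr
  set M := volume (Q ∩ ball y (r + r₀)) with hM
  have hV₀0 : V₀ ≠ 0 := (measure_ball_pos volume _ hr₀).ne'
  have hV₀t : V₀ ≠ ⊤ := measure_ball_lt_top.ne
  have hVr0 : Vr ≠ 0 := (measure_ball_pos volume _ hr).ne'
  have hVrt : Vr ≠ ⊤ := measure_ball_lt_top.ne
  -- the key cross-multiplied inequality
  have key : ENNReal.ofReal δ₀ * Vr ≤ M * V₀ := by
    have step1 : ENNReal.ofReal δ₀ * Vr ≤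
        ∫⁻ x in ball y r, volume (Q ∩ ball x r₀) := by
      have : ENNReal.ofReal δ₀ * Vr = ∫⁻ _ in ball y r, ENNReal.ofReal δ₀ := by
        rw [setLIntegral_const, Measure.addHaar_ball_center volume y]
      rw [this]
      exact lintegral_mono fun x => h x
    have step2 : ∀ x : Euc d, volume (Q ∩ ball x r₀) =
        ∫⁻ z, (Q ∩ ball x r₀).indicator 1 z := fun x =>
      (lintegral_indicator_one (hQ.inter measurableSet_ball)).symm
    have hmeas : AEMeasurable (Function.uncurry fun (x z : Euc d) =>
        (Q ∩ ball x r₀).indicator (1 : Euc d → ℝ≥0∞) z)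
        ((volume.restrict (ball y r)).prod volume) := by
      have hset : MeasurableSet {p : Euc d × Euc d | p.2 ∈ Q ∧ dist p.2 p.1 < r₀} := by
        exact (measurable_snd hQ).inter
          (measurableSet_lt (measurable_snd.dist measurable_fst) measurable_const)
      have : (Function.uncurry fun (x z : Euc d) =>
          (Q ∩ ball x r₀).indicator (1 : Euc d → ℝ≥0∞) z) =
          Set.indicator {p : Euc d × Euc d | p.2 ∈ Q ∧ dist p.2 p.1 < r₀} 1 := by
        funext p
        by_cases hp : p.2 ∈ Q ∧ dist p.2 p.1 < r₀ <;>
          simp [Function.uncurry, Set.indicator, hp, Set.mem_inter_iff, mem_ball]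
      rw [this]
      exact (measurable_const.indicator hset).aemeasurable
    have step3 : (∫⁻ x in ball y r, ∫⁻ z, (Q ∩ ball x r₀).indicator 1 z) =
        ∫⁻ z, ∫⁻ x in ball y r, (Q ∩ ball x r₀).indicator 1 z :=
      lintegral_lintegral_swap hmeas
    have step4 : ∀ z : Euc d,
        (∫⁻ x in ball y r, (Q ∩ ball x r₀).indicator 1 z) ≤
          (Q ∩ ball y (r + r₀)).indicator 1 z * V₀ := by
      intro z
      calc (∫⁻ x in ball y r, (Q ∩ ball x r₀).indicator 1 z)
          = ∫⁻ x, (ball y r).indicator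
              (fun x => (Q ∩ ball x r₀).indicator 1 z) x := by
            rw [lintegral_indicator measurableSet_ball]
        _ ≤ ∫⁻ x, (Q ∩ ball y (r + r₀)).indicator 1 z *
              (ball z r₀).indicator 1 x := by
            refine lintegral_mono fun x => ?_
            by_cases hx : x ∈ ball y r
            · by_cases hz : z ∈ Q ∩ ball x r₀
              · have h1 : z ∈ Q ∩ ball y (r + r₀) := by
                  refine ⟨hz.1, ?_⟩
                  rw [mem_ball] at *
                  calc dist z y ≤ dist z x + dist x y := dist_triangle _ _ _
                    _ < r₀ + r := add_lt_add hz.2 hx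
                    _ = r + r₀ := add_comm _ _
                have h2 : x ∈ ball z r₀ := by
                  rw [mem_ball, dist_comm]; exact hz.2
                simp [Set.indicator_of_mem, hx, hz, h1, h2]
              · simp [Set.indicator, hx, hz]
            · simp [Set.indicator_of_notMem hx]
        _ = (Q ∩ ball y (r + r₀)).indicator 1 z * V₀ := by
            rw [lintegral_const_mul' _ _ (by
              by_cases hz : z ∈ Q ∩ ball y (r + r₀) <;>
                simp [Set.indicator, hz]),
              lintegral_indicator_one measurableSet_ball, hV₀,
              Measure.addHaar_ball_center]
    calc ENNReal.ofReal δ₀ * Vr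
        ≤ ∫⁻ x in ball y r, volume (Q ∩ ball x r₀) := step1
      _ = ∫⁻ z, ∫⁻ x in ball y r, (Q ∩ ball x r₀).indicator 1 z := by
          simp_rw [step2]; exact step3
      _ ≤ ∫⁻ z, (Q ∩ ball y (r + r₀)).indicator 1 z * V₀ :=
          lintegral_mono step4
      _ = M * V₀ := by
          rw [lintegral_mul_const' _ _ hV₀t,
            lintegral_indicator_one (hQ.inter measurableSet_ball)]
  rw [ENNReal.div_le_iff_le_mul (Or.inl hV₀0) (Or.inl hV₀t),
    ENNReal.div_eq_inv_mul]
  rw [← ENNReal.le_div_iff_mul_le (Or.inl hVr0) (Or.inl hVrt)] at key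
  calc ENNReal.ofReal δ₀ ≤ M * V₀ / Vr := key
    _ = Vr⁻¹ * M * V₀ := by
        rw [div_eq_mul_inv]; ring


end
end

section
/- Let H be a Hilbert space, let {f_i}_{i∈I} be a frame for H with frame operator S, and suppose ⟨f_i, S^{-1} f_i⟩ = 1 for all i ∈ I. Then {S^{-1/2} f_i}_{i∈I} is an orthonormal basis of H, and consequently {f_i}_{i∈I} is a Riesz basis for H. -/
open MeasureTheory Filter Metric Complex
open scoped ENNReal InnerProductSpace ComplexConjugate

noncomputable section

variable {d : ℕ}

section AuxStmt14
variable {H : Type*} [NormedAddCommGroup H] [InnerProductSpace ℂ H] [CompleteSpace H]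
  {ι : Type*}

lemma aux14_summable_sq (F : ι → H) (A B : ℝ) (hA : 0 < A)
    (hframe : ∀ f : H, A * ‖f‖ ^ 2 ≤ ∑' i, ‖⟪F i, f⟫_ℂ‖ ^ 2 ∧
      ∑' i, ‖⟪F i, f⟫_ℂ‖ ^ 2 ≤ B * ‖f‖ ^ 2) (g : H) :
    Summable fun i => ‖⟪F i, g⟫_ℂ‖ ^ 2 := by
  by_cases hg : g = 0
  · subst hg; simpa using summable_zero
  by_contra hns
  have h0 : ∑' i, ‖⟪F i, g⟫_ℂ‖ ^ 2 = 0 := tsum_eq_zero_of_not_summable hns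
  have h1 := (hframe g).1
  rw [h0] at h1
  have hg' : 0 < ‖g‖ := norm_pos_iff.2 hg
  have := mul_pos hA (pow_pos hg' 2)
  linarith

lemma aux14_norm_sum_le (F : ι → H) (B : ℝ) (hB : 0 < B)
    (hbessel : ∀ f : H, ∑' i, ‖⟪F i, f⟫_ℂ‖ ^ 2 ≤ B * ‖f‖ ^ 2)
    (hsum : ∀ f : H, Summable fun i => ‖⟪F i, f⟫_ℂ‖ ^ 2)
    (c : ι → ℂ) (t : Finset ι) :
    ‖∑ i ∈ t, c i • F i‖ ^ 2 ≤ B * ∑ i ∈ t, ‖c i‖ ^ 2 := by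
  set h : H := ∑ i ∈ t, c i • F i with hh
  have hSnn : (0:ℝ) ≤ ∑ i ∈ t, ‖c i‖ ^ 2 := Finset.sum_nonneg fun i _ => sq_nonneg _
  by_cases hz : h = 0
  · rw [hz]
    simpa using mul_nonneg hB.le hSnn
  have hinner : ⟪h, h⟫_ℂ = ∑ i ∈ t, c i * ⟪h, F i⟫_ℂ := by
    conv_lhs => rw [hh]
    rw [inner_sum]
    exact Finset.sum_congr rfl fun i _ => inner_smul_right _ _ _
  have h1 : ‖h‖ ^ 2 ≤ ∑ i ∈ t, ‖c i‖ * ‖⟪h, F i⟫_ℂ‖ := by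
    have e1 : ‖h‖ ^ 2 = ‖⟪h, h⟫_ℂ‖ := by
      rw [@inner_self_eq_norm_sq_to_K ℂ]
      simp [pow_two_nonneg]
    rw [e1, hinner]
    refine (norm_sum_le _ _).trans ?_
    refine Finset.sum_le_sum fun i _ => ?_
    rw [norm_mul]
  have hCS : (∑ i ∈ t, ‖c i‖ * ‖⟪h, F i⟫_ℂ‖) ^ 2 ≤
      (∑ i ∈ t, ‖c i‖ ^ 2) * ∑ i ∈ t, ‖⟪h, F i⟫_ℂ‖ ^ 2 :=
    Finset.sum_mul_sq_le_sq_mul_sq t _ _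
  have hB2 : ∑ i ∈ t, ‖⟪h, F i⟫_ℂ‖ ^ 2 ≤ B * ‖h‖ ^ 2 := by
    calc ∑ i ∈ t, ‖⟪h, F i⟫_ℂ‖ ^ 2 = ∑ i ∈ t, ‖⟪F i, h⟫_ℂ‖ ^ 2 :=
          Finset.sum_congr rfl fun i _ => by rw [norm_inner_symm]
      _ ≤ ∑' i, ‖⟪F i, h⟫_ℂ‖ ^ 2 := Summable.sum_le_tsum t (fun i _ => sq_nonneg _) (hsum h)
      _ ≤ B * ‖h‖ ^ 2 := hbessel h
  have hNpos : 0 < ‖h‖ := norm_pos_iff.2 hz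
  have hXnn : (0:ℝ) ≤ ∑ i ∈ t, ‖c i‖ * ‖⟪h, F i⟫_ℂ‖ :=
    Finset.sum_nonneg fun i _ => mul_nonneg (norm_nonneg _) (norm_nonneg _)
  nlinarith [sq_nonneg ‖h‖, mul_pos hNpos hNpos,
    mul_le_mul_of_nonneg_left hB2 hSnn]

lemma aux14_summable_smul (F : ι → H) (B : ℝ) (hB : 0 < B)
    (hbessel : ∀ f : H, ∑' i, ‖⟪F i, f⟫_ℂ‖ ^ 2 ≤ B * ‖f‖ ^ 2)
    (hsum : ∀ f : H, Summable fun i => ‖⟪F i, f⟫_ℂ‖ ^ 2)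
    (c : ι → ℂ) (hc : Summable fun i => ‖c i‖ ^ 2) :
    Summable fun i => c i • F i := by
  rw [summable_iff_vanishing]
  intro e he
  obtain ⟨ε, hε, hball⟩ := Metric.mem_nhds_iff.1 he
  obtain ⟨s, hs⟩ := summable_iff_vanishing.1 hc (Metric.ball 0 (ε ^ 2 / B))
    (Metric.ball_mem_nhds 0 (by positivity))
  refine ⟨s, fun t ht => ?_⟩
  apply hball
  have h1 : ∑ i ∈ t, ‖c i‖ ^ 2 < ε ^ 2 / B := by
    have h2 := hs t ht
    rw [Metric.mem_ball, Real.dist_eq, sub_zero] at h2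
    exact (le_abs_self _).trans_lt h2
  have h3 := aux14_norm_sum_le F B hB hbessel hsum c t
  rw [Metric.mem_ball, dist_zero_right]
  have h4 : ‖∑ i ∈ t, c i • F i‖ ^ 2 < ε ^ 2 :=
    h3.trans_lt (by rw [lt_div_iff₀ hB] at h1; linarith)
  exact lt_of_pow_lt_pow_left₀ 2 hε.le h4

lemma aux14_parseval (F : ι → H) (A B : ℝ) (hA : 0 < A) (hAB : A ≤ B)
    (hframe : ∀ f : H, A * ‖f‖ ^ 2 ≤ ∑' i, ‖⟪F i, f⟫_ℂ‖ ^ 2 ∧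
      ∑' i, ‖⟪F i, f⟫_ℂ‖ ^ 2 ≤ B * ‖f‖ ^ 2)
    (Sop : H →L[ℂ] H) (hSop : ∀ f : H, Sop f = ∑' i, ⟪F i, f⟫_ℂ • F i) (g : H) :
    ∑' i, ‖⟪F i, g⟫_ℂ‖ ^ 2 = (⟪g, Sop g⟫_ℂ).re := by
  have hsum : ∀ f : H, Summable fun i => ‖⟪F i, f⟫_ℂ‖ ^ 2 :=
    aux14_summable_sq F A B hA hframe
  have hbessel : ∀ f : H, ∑' i, ‖⟪F i, f⟫_ℂ‖ ^ 2 ≤ B * ‖f‖ ^ 2 := fun f => (hframe f).2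
  have hsm : Summable fun i => ⟪F i, g⟫_ℂ • F i :=
    aux14_summable_smul F B (hA.trans_le hAB) hbessel hsum _ (hsum g)
  have h2 : ∀ i, ⟪g, ⟪F i, g⟫_ℂ • F i⟫_ℂ = ((‖⟪F i, g⟫_ℂ‖ ^ 2 : ℝ) : ℂ) := by
    intro i
    rw [inner_smul_right, ← inner_conj_symm g (F i), Complex.mul_conj']
    norm_cast
  have h3 : ⟪g, Sop g⟫_ℂ = ((∑' i, ‖⟪F i, g⟫_ℂ‖ ^ 2 : ℝ) : ℂ) := by
    have h4 : ⟪g, Sop g⟫_ℂ = ∑' i, ⟪g, ⟪F i, g⟫_ℂ • F i⟫_ℂ := by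
      rw [show ⟪g, Sop g⟫_ℂ = (innerSL ℂ g) (Sop g) from rfl, hSop g,
        (innerSL ℂ g).map_tsum hsm]
      rfl
    rw [h4, Complex.ofReal_tsum]
    exact tsum_congr fun i => h2 i
  rw [h3, Complex.ofReal_re]

end AuxStmt14


theorem stmt14 {H : Type*} [NormedAddCommGroup H] [InnerProductSpace ℂ H]
    [CompleteSpace H] {ι : Type*} (F : ι → H)
    (A B : ℝ) (hA : 0 < A) (hAB : A ≤ B)
    (hframe : ∀ f : H, A * ‖f‖ ^ 2 ≤ ∑' i, ‖⟪F i, f⟫_ℂ‖ ^ 2 ∧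
      ∑' i, ‖⟪F i, f⟫_ℂ‖ ^ 2 ≤ B * ‖f‖ ^ 2)
    (Sop T R : H →L[ℂ] H)
    (hSop : ∀ f : H, Sop f = ∑' i, ⟪F i, f⟫_ℂ • F i)
    (hT : ∀ f : H, Sop (T f) = f ∧ T (Sop f) = f)
    (hRsa : ∀ f g : H, ⟪R f, g⟫_ℂ = ⟪f, R g⟫_ℂ)
    (hRsq : ∀ f : H, R (R f) = T f)
    (hRpos : ∀ f : H, 0 ≤ (⟪R f, f⟫_ℂ).re)
    (hdiag : ∀ i : ι, ⟪F i, T (F i)⟫_ℂ = 1) :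
    (Orthonormal ℂ (fun i => R (F i)) ∧
      (Submodule.span ℂ (Set.range fun i => R (F i))).topologicalClosure = ⊤) ∧
    ∃ V W : H →L[ℂ] H, (∀ x, W (V x) = x) ∧ (∀ x, V (W x) = x) ∧
      ∀ i, F i = V (R (F i)) := by
  classical
  have hsum : ∀ f : H, Summable fun i => ‖⟪F i, f⟫_ℂ‖ ^ 2 :=
    aux14_summable_sq F A B hA hframe
  have hpar : ∀ g : H, ∑' i, ‖⟪F i, g⟫_ℂ‖ ^ 2 = (⟪g, Sop g⟫_ℂ).re :=
    aux14_parseval F A B hA hAB hframe Sop hSop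
  have hTR : ∀ x, T (R x) = R (T x) := fun x => by
    rw [← hRsq x, ← hRsq (R x)]
  have hSR : ∀ x, Sop (R x) = R (Sop x) := fun x => by
    calc Sop (R x) = Sop (R (T (Sop x))) := by rw [(hT x).2]
      _ = Sop (T (R (Sop x))) := by rw [hTR (Sop x)]
      _ = R (Sop x) := (hT _).1
  have hon : Orthonormal ℂ (fun i => R (F i)) := by
    rw [orthonormal_iff_ite]
    intro i j
    have hij : ⟪R (F i), R (F j)⟫_ℂ = ⟪F i, T (F j)⟫_ℂ := by rw [hRsa, hRsq]
    by_cases h : i = j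
    · subst h
      rw [if_pos rfl, hij, hdiag i]
    · rw [if_neg h]
      simp only [hij]
      have hSg : Sop (T (F j)) = F j := (hT (F j)).1
      have htot : ∑' k, ‖⟪F k, T (F j)⟫_ℂ‖ ^ 2 = 1 := by
        rw [hpar (T (F j)), hSg]
        have e1 : ⟪T (F j), F j⟫_ℂ = 1 := by
          rw [← inner_conj_symm, hdiag j, map_one]
        rw [e1]
        simp
      have hj : ‖⟪F j, T (F j)⟫_ℂ‖ ^ 2 = 1 := by rw [hdiag j]; simp
      have hpair : ‖⟪F i, T (F j)⟫_ℂ‖ ^ 2 + ‖⟪F j, T (F j)⟫_ℂ‖ ^ 2 ≤ 1 := by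
        rw [← htot]
        have h5 := Summable.sum_le_tsum ({i, j} : Finset ι)
          (fun k _ => sq_nonneg _) (hsum (T (F j)))
        rwa [Finset.sum_pair h] at h5
      have h6 : ‖⟪F i, T (F j)⟫_ℂ‖ ^ 2 ≤ 0 := by rw [hj] at hpair; linarith
      have h7 : ‖⟪F i, T (F j)⟫_ℂ‖ ^ 2 = 0 := le_antisymm h6 (sq_nonneg _)
      exact norm_eq_zero.1 (pow_eq_zero_iff (by norm_num : (2:ℕ) ≠ 0) |>.1 h7)
  have hcomp : (Submodule.span ℂ (Set.range fun i => R (F i))).topologicalClosure = ⊤ := by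
    rw [Submodule.topologicalClosure_eq_top_iff, Submodule.eq_bot_iff]
    intro x hx
    have hx' : ∀ i, ⟪F i, R x⟫_ℂ = 0 := fun i => by
      rw [← hRsa]
      exact (Submodule.mem_orthogonal _ x).1 hx _ (Submodule.subset_span ⟨i, rfl⟩)
    have h0 : ∑' i, ‖⟪F i, R x⟫_ℂ‖ ^ 2 = 0 := by simp [hx']
    have h1 := (hframe (R x)).1
    rw [h0] at h1
    have hRx : R x = 0 := by
      have h1' : A * ‖R x‖ ^ 2 ≤ A * 0 := by linarith
      have h2 : ‖R x‖ ^ 2 ≤ 0 := le_of_mul_le_mul_left h1' hA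
      have h3 : ‖R x‖ ^ 2 = 0 := le_antisymm h2 (sq_nonneg _)
      exact norm_eq_zero.1 (pow_eq_zero_iff (by norm_num : (2:ℕ) ≠ 0) |>.1 h3)
    have hTx : T x = 0 := by rw [← hRsq, hRx, map_zero]
    calc x = Sop (T x) := ((hT x).1).symm
      _ = 0 := by rw [hTx, map_zero]
  refine ⟨⟨hon, hcomp⟩, Sop.comp R, R, ?_, ?_, ?_⟩
  · intro x
    simp only [ContinuousLinearMap.comp_apply]
    rw [hSR x, hRsq, (hT x).2]
  · intro x
    simp only [ContinuousLinearMap.comp_apply]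
    rw [hRsq, (hT x).1]
  · intro i
    simp only [ContinuousLinearMap.comp_apply]
    rw [hRsq, (hT (F i)).1]


end
end
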